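/- Let a, b > 0 with a + b > 1, a ≠ 1 and b ≠ 1, and set c = min{a, b, a+b−1}. Then there exists a constant C > 0, depending only on a and b, such that for all α, β ∈ ℝ: ∫_ℝ dx / (⟨x−α⟩^a ⟨x−β⟩^b) ≤ C ⟨α−β⟩^{−c}. -/

import Mathlib

open MeasureTheory Set

lemma cont_jb (p : ℝ) : Continuous (fun x : ℝ => (1 + |x|) ^ (-p)) := by
  apply Continuous.rpow_const (continuous_const.add continuous_abs)
  intro x; left; have hpos : (0:ℝ) < 1 + |x| := by positivity
  exact ne_of_gt hpos

lemma jb_onesided (p : ℝ) (hp1 : p ≠ 1) (R : ℝ) (hR : 0 ≤ R) :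
    ∫ x in (0:ℝ)..R, (1 + x) ^ (-p) = ((1 + R) ^ (1 - p) - 1) / (1 - p) := by
  have h1 : ∫ x in (0:ℝ)..R, (1 + x) ^ (-p) = ∫ x in (1:ℝ)..(1+R), x ^ (-p) := by
    simpa using intervalIntegral.integral_comp_add_left (a := (0:ℝ)) (b := R)
      (fun y : ℝ => y ^ (-p)) 1
  rw [h1, integral_rpow]
  · rw [Real.one_rpow]
    ring_nf
  · right
    constructor
    · intro h
      apply hp1
      have : p = 1 := by linarith [neg_injective h]
      exact this
    · intro h
      rw [Set.mem_uIcc] at h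
      rcases h with h | h <;> linarith [h.1, h.2]

lemma ball_integral (p : ℝ) (hp : 0 < p) (hp1 : p ≠ 1) (R : ℝ) (hR : 0 ≤ R) :
    ∫ x in Icc (-R) R, (1 + |x|) ^ (-p) ≤ 2 / |1 - p| * (1 + R) ^ (max (1 - p) 0) := by
  have hii : ∀ u v : ℝ, IntervalIntegrable (fun x : ℝ => (1 + |x|) ^ (-p)) volume u v :=
    fun u v => (cont_jb p).intervalIntegrable u v
  have hIcc : ∫ x in Icc (-R) R, (1 + |x|) ^ (-p)
      = ∫ x in (-R)..R, (1 + |x|) ^ (-p) := by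
    rw [intervalIntegral.integral_of_le (by linarith), integral_Icc_eq_integral_Ioc]
  have hsplit : ∫ x in (-R)..R, (1 + |x|) ^ (-p)
      = (∫ x in (-R)..(0:ℝ), (1 + |x|) ^ (-p)) + ∫ x in (0:ℝ)..R, (1 + |x|) ^ (-p) :=
    (intervalIntegral.integral_add_adjacent_intervals (hii _ _) (hii _ _)).symm
  have heven : ∫ x in (-R)..(0:ℝ), (1 + |x|) ^ (-p) = ∫ x in (0:ℝ)..R, (1 + |x|) ^ (-p) := by
    rw [show (0:ℝ) = -0 by norm_num, ← intervalIntegral.integral_comp_neg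
      (fun x : ℝ => (1 + |x|) ^ (-p))]
    simp [abs_neg]
  have habs : ∫ x in (0:ℝ)..R, (1 + |x|) ^ (-p) = ∫ x in (0:ℝ)..R, (1 + x) ^ (-p) := by
    apply intervalIntegral.integral_congr
    intro x hx
    rw [Set.uIcc_of_le hR] at hx
    simp only []
    rw [abs_of_nonneg hx.1]
  have hval := jb_onesided p hp1 R hR
  have h1R : (1:ℝ) ≤ 1 + R := by linarith
  have hA : (0:ℝ) ≤ (1 + R) ^ (1 - p) := Real.rpow_nonneg (by linarith) _
  rw [hIcc, hsplit, heven, habs, hval]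
  set A := (1 + R) ^ (1 - p) with hAdef
  rcases lt_or_gt_of_ne hp1 with h | h
  · have hmax : max (1 - p) 0 = 1 - p := max_eq_left (by linarith)
    have habs1 : |1 - p| = 1 - p := abs_of_pos (by linarith)
    rw [hmax, habs1]
    have hX : (A - 1) / (1 - p) ≤ A / (1 - p) := by gcongr <;> linarith
    have : 2 / (1 - p) * A = A / (1 - p) + A / (1 - p) := by ring
    linarith
  · have hmax : max (1 - p) 0 = 0 := max_eq_right (by linarith)
    have habs1 : |1 - p| = p - 1 := by rw [abs_of_neg (by linarith)]; ring
    have hA1 : A ≤ 1 := Real.rpow_le_one_of_one_le_of_nonpos h1R (by linarith)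
    rw [hmax, habs1, Real.rpow_zero, mul_one]
    have hrw : (A - 1) / (1 - p) = (1 - A) / (p - 1) := by
      rw [show A - 1 = -(1 - A) by ring, show 1 - p = -(p - 1) by ring, neg_div_neg_eq]
    have hX : (1 - A) / (p - 1) ≤ 1 / (p - 1) := by gcongr <;> linarith
    have : 2 / (p - 1) = 1 / (p - 1) + 1 / (p - 1) := by ring
    linarith [hrw ▸ hX]


lemma jb_integrable {r : ℝ} (hr : 1 < r) : Integrable (fun x : ℝ => (1 + |x|) ^ (-r)) := by
  have := integrable_one_add_norm (E := ℝ) (μ := volume) (r := r) (by simpa using hr)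
  simpa [Real.norm_eq_abs] using this

lemma tail_onesided (q : ℝ) (hq : 1 < q) (R : ℝ) (hR : 0 ≤ R) :
    ∫ x in Ioi R, (1 + |x|) ^ (-q) = (1 + R) ^ (1 - q) / (q - 1) := by
  have hcongr : ∫ x in Ioi R, (1 + |x|) ^ (-q) = ∫ x in Ioi R, (1 + x) ^ (-q) := by
    refine setIntegral_congr_fun measurableSet_Ioi (fun x hx => ?_)
    rw [abs_of_nonneg (le_of_lt (lt_of_le_of_lt hR hx))]
  rw [hcongr]
  have hq1 : (1:ℝ) - q ≠ 0 := by intro h; apply absurd hq; push_neg; linarith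
  have hderiv : ∀ x ∈ Ici R, HasDerivAt (fun y : ℝ => (1 + y) ^ (1 - q) / (1 - q))
      ((1 + x) ^ (-q)) x := by
    intro x hx
    have hxR : R ≤ x := hx
    have hx0 : (0:ℝ) < 1 + x := by linarith
    have h1 : HasDerivAt (fun y : ℝ => 1 + y) 1 x := (hasDerivAt_id x).const_add 1
    have h2 := h1.rpow_const (p := 1 - q) (Or.inl (ne_of_gt hx0))
    have h3 := h2.div_const (1 - q)
    have heq : 1 * (1 - q) * (1 + x) ^ (1 - q - 1) / (1 - q) = (1 + x) ^ (-q) := by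
      rw [show (1 - q - 1 : ℝ) = -q by ring]
      field_simp
    exact heq ▸ h3
  have hint : IntegrableOn (fun x : ℝ => (1 + x) ^ (-q)) (Ioi R) := by
    refine ((jb_integrable hq).integrableOn (s := Ioi R)).congr_fun (fun x hx => ?_)
      measurableSet_Ioi
    show (1 + |x|) ^ (-q) = (1 + x) ^ (-q)
    rw [abs_of_nonneg (le_of_lt (lt_of_le_of_lt hR hx))]
  have htend : Filter.Tendsto (fun y : ℝ => (1 + y) ^ (1 - q) / (1 - q))
      Filter.atTop (nhds 0) := by
    have h1 : Filter.Tendsto (fun y : ℝ => 1 + y) Filter.atTop Filter.atTop :=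
      Filter.tendsto_atTop_add_const_left _ 1 Filter.tendsto_id
    have h2 : Filter.Tendsto (fun z : ℝ => z ^ (1 - q)) Filter.atTop (nhds 0) := by
      rw [show (1 - q : ℝ) = -(q - 1) by ring]
      exact tendsto_rpow_neg_atTop (by linarith)
    have h3 := (h2.comp h1).div_const (1 - q)
    simpa using h3
  rw [integral_Ioi_of_hasDerivAt_of_tendsto' hderiv hint htend, zero_sub,
    show (1 - q : ℝ) = -(q - 1) by ring, div_neg, neg_neg]



lemma tail_integral (q : ℝ) (hq : 1 < q) (R : ℝ) (hR : 0 ≤ R) :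
    ∫ x in {x : ℝ | R < |x|}, (1 + |x|) ^ (-q) ≤ 2 / (q - 1) * (1 + R) ^ (1 - q) := by
  have hset : {x : ℝ | R < |x|} = Iio (-R) ∪ Ioi R := by
    ext x
    simp only [mem_setOf_eq, mem_union, mem_Iio, mem_Ioi, lt_abs]
    constructor
    · rintro (h | h)
      · right; exact h
      · left; linarith
    · rintro (h | h)
      · right; linarith
      · left; exact h
  have hdisj : Disjoint (Iio (-R)) (Ioi R) :=
    (Iio_disjoint_Ici (by linarith)).mono_right Ioi_subset_Ici_self
  have hint := jb_integrable hq
  rw [hset, setIntegral_union hdisj measurableSet_Ioi hint.integrableOn hint.integrableOn]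
  have hIio : ∫ x in Iio (-R), (1 + |x|) ^ (-q) = ∫ x in Ioi R, (1 + |x|) ^ (-q) := by
    rw [Measure.restrict_congr_set Iio_ae_eq_Iic]
    have := integral_comp_neg_Iic (-R) (fun x : ℝ => (1 + |x|) ^ (-q))
    simp only [abs_neg, neg_neg] at this
    exact this
  rw [hIio, tail_onesided q hq R hR]
  have h1 : (0:ℝ) < q - 1 := by linarith
  have h2 : (0:ℝ) ≤ (1 + R) ^ (1 - q) := Real.rpow_nonneg (by linarith) _
  rw [show 2 / (q - 1) * (1 + R) ^ (1 - q) = (1 + R) ^ (1 - q) / (q - 1) + (1 + R) ^ (1 - q) / (q - 1) by ring]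



set_option maxHeartbeats 1000000 in
lemma key_lemma (a b : ℝ) (ha : 0 < a) (hb : 0 < b) (hab : 1 < a + b)
    (ha1 : a ≠ 1) (hb1 : b ≠ 1) (t : ℝ) :
    ∫ x : ℝ, (1 + |x|) ^ (-a) * (1 + |x - t|) ^ (-b)
      ≤ (2 * 2 ^ b / |1 - a| + 2 * 2 ^ a / |1 - b| + 3 ^ b * (2 / (a + b - 1)) * 2 ^ (a + b - 1))
        * (1 + |t|) ^ (-(min (min a b) (a + b - 1))) := by
  set c := min (min a b) (a + b - 1) with hc
  set R := |t| / 2 with hRdef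
  set τ := 1 + |t| with hτdef
  have hR0 : 0 ≤ R := by positivity
  have hτpos : 0 < τ := by positivity
  have hτ1 : 1 ≤ τ := by rw [hτdef]; linarith [abs_nonneg t]
  have h1Rτ : 1 + R ≤ τ := by rw [hτdef, hRdef]; linarith [abs_nonneg t]
  have hτ2R : τ / 2 ≤ 1 + R := by rw [hτdef, hRdef]; linarith
  have h1R0 : (0:ℝ) < 1 + R := by linarith
  have hca : c ≤ a := le_trans (min_le_left _ _) (min_le_left _ _)
  have hcb : c ≤ b := le_trans (min_le_left _ _) (min_le_right _ _)
  have hcab : c ≤ a + b - 1 := min_le_right _ _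
  set g1 : ℝ → ℝ := Set.indicator (Icc (-R) R) (fun y => (1 + |y|) ^ (-a)) with hg1def
  set g2 : ℝ → ℝ := Set.indicator (Icc (-R) R) (fun y => (1 + |y|) ^ (-b)) with hg2def
  set g3 : ℝ → ℝ := Set.indicator {y : ℝ | R < |y|} (fun y => (1 + |y|) ^ (-(a + b))) with hg3def
  have hg1nn : ∀ x, 0 ≤ g1 x := fun x => Set.indicator_nonneg (fun y _ => by positivity) x
  have hg2nn : ∀ x, 0 ≤ g2 x := fun x => Set.indicator_nonneg (fun y _ => by positivity) x
  have hg3nn : ∀ x, 0 ≤ g3 x := fun x => Set.indicator_nonneg (fun y _ => by positivity) x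
  have h2b : (0:ℝ) ≤ 2 ^ b := Real.rpow_nonneg (by norm_num) _
  have h2a : (0:ℝ) ≤ 2 ^ a := Real.rpow_nonneg (by norm_num) _
  have h3b : (0:ℝ) ≤ 3 ^ b := Real.rpow_nonneg (by norm_num) _
  have hτb : (0:ℝ) ≤ τ ^ (-b) := Real.rpow_nonneg (le_of_lt hτpos) _
  have hτa : (0:ℝ) ≤ τ ^ (-a) := Real.rpow_nonneg (le_of_lt hτpos) _
  set H : ℝ → ℝ := fun x =>
    2 ^ b * τ ^ (-b) * g1 x + 2 ^ a * τ ^ (-a) * g2 (x - t) + 3 ^ b * g3 x with hHdef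
  -- pointwise bound
  have hFH : ∀ x : ℝ, (1 + |x|) ^ (-a) * (1 + |x - t|) ^ (-b) ≤ H x := by
    intro x
    have hx0 : (0:ℝ) < 1 + |x| := by positivity
    have hxt0 : (0:ℝ) < 1 + |x - t| := by positivity
    have hnn1 : 0 ≤ 2 ^ b * τ ^ (-b) * g1 x := mul_nonneg (mul_nonneg h2b hτb) (hg1nn x)
    have hnn2 : 0 ≤ 2 ^ a * τ ^ (-a) * g2 (x - t) := mul_nonneg (mul_nonneg h2a hτa) (hg2nn _)
    have hnn3 : 0 ≤ 3 ^ b * g3 x := mul_nonneg h3b (hg3nn x)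
    have htri : |t| ≤ |x| + |x - t| := by
      calc |t| = |x - (x - t)| := by rw [show x - (x - t) = t by ring]
      _ ≤ |x| + |x - t| := abs_sub _ _
    by_cases h1 : |x| ≤ R
    · -- near 0 : |x - t| is large
      have hlarge : τ / 2 ≤ 1 + |x - t| := by
        rw [hτdef]; rw [hRdef] at h1; linarith
      have hb1' : (1 + |x - t|) ^ (-b) ≤ (τ / 2) ^ (-b) :=
        Real.rpow_le_rpow_of_nonpos (by positivity) hlarge (by linarith)
      have hid : (τ / 2) ^ (-b) = 2 ^ b * τ ^ (-b) := by
        rw [Real.div_rpow (le_of_lt hτpos) (by norm_num), Real.rpow_neg (by norm_num : (0:ℝ) ≤ 2),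
          div_eq_mul_inv, inv_inv, mul_comm]
      have hg1x : g1 x = (1 + |x|) ^ (-a) := by
        rw [hg1def, Set.indicator_of_mem (Set.mem_Icc.mpr (abs_le.mp h1))]
      have hstep : (1 + |x|) ^ (-a) * (1 + |x - t|) ^ (-b)
          ≤ (1 + |x|) ^ (-a) * (2 ^ b * τ ^ (-b)) :=
        mul_le_mul_of_nonneg_left (hid ▸ hb1') (Real.rpow_nonneg (le_of_lt hx0) _)
      have hstep' : (1 + |x|) ^ (-a) * (1 + |x - t|) ^ (-b)
          ≤ 2 ^ b * τ ^ (-b) * (1 + |x|) ^ (-a) := hstep.trans (le_of_eq (by ring))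
      rw [hHdef]; dsimp only; rw [hg1x]
      linarith [hstep', hnn2, hnn3]
    · by_cases h2 : |x - t| ≤ R
      · -- near t : |x| is large
        have hlarge : τ / 2 ≤ 1 + |x| := by
          rw [hτdef]; rw [hRdef] at h2; linarith
        have ha1' : (1 + |x|) ^ (-a) ≤ (τ / 2) ^ (-a) :=
          Real.rpow_le_rpow_of_nonpos (by positivity) hlarge (by linarith)
        have hid : (τ / 2) ^ (-a) = 2 ^ a * τ ^ (-a) := by
          rw [Real.div_rpow (le_of_lt hτpos) (by norm_num), Real.rpow_neg (by norm_num : (0:ℝ) ≤ 2),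
            div_eq_mul_inv, inv_inv, mul_comm]
        have hg2x : g2 (x - t) = (1 + |x - t|) ^ (-b) := by
          rw [hg2def, Set.indicator_of_mem (Set.mem_Icc.mpr (abs_le.mp h2))]
        have hstep : (1 + |x|) ^ (-a) * (1 + |x - t|) ^ (-b)
            ≤ (2 ^ a * τ ^ (-a)) * (1 + |x - t|) ^ (-b) :=
          mul_le_mul_of_nonneg_right (hid ▸ ha1') (Real.rpow_nonneg (le_of_lt hxt0) _)
        rw [hHdef]; dsimp only; rw [hg2x]
        linarith [hstep, hnn1, hnn3]
      · -- both far : comparable brackets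
        push_neg at h1 h2
        have hcomp : (1 + |x|) / 3 ≤ 1 + |x - t| := by
          have h3' : |x| ≤ |x - t| + |t| := by
            calc |x| = |(x - t) + t| := by rw [sub_add_cancel]
            _ ≤ |x - t| + |t| := abs_add_le _ _
          rw [hRdef] at h2
          linarith
        have hb1' : (1 + |x - t|) ^ (-b) ≤ ((1 + |x|) / 3) ^ (-b) :=
          Real.rpow_le_rpow_of_nonpos (by positivity) hcomp (by linarith)
        have hid : ((1 + |x|) / 3) ^ (-b) = 3 ^ b * (1 + |x|) ^ (-b) := by
          rw [Real.div_rpow (le_of_lt hx0) (by norm_num), Real.rpow_neg (by norm_num : (0:ℝ) ≤ 3),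
            div_eq_mul_inv, inv_inv, mul_comm]
        have hg3x : g3 x = (1 + |x|) ^ (-(a + b)) := by
          rw [hg3def]
          exact Set.indicator_of_mem (show x ∈ {y : ℝ | R < |y|} from h1) _
        have hstep : (1 + |x|) ^ (-a) * (1 + |x - t|) ^ (-b)
            ≤ (1 + |x|) ^ (-a) * (3 ^ b * (1 + |x|) ^ (-b)) :=
          mul_le_mul_of_nonneg_left (hid ▸ hb1') (Real.rpow_nonneg (le_of_lt hx0) _)
        have hmerge : (1 + |x|) ^ (-a) * (3 ^ b * (1 + |x|) ^ (-b))
            = 3 ^ b * (1 + |x|) ^ (-(a + b)) := by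
          rw [show (-(a+b) : ℝ) = -a + -b by ring, Real.rpow_add hx0]
          ring
        have hfinal : (1 + |x|) ^ (-a) * (1 + |x - t|) ^ (-b)
            ≤ 3 ^ b * (1 + |x|) ^ (-(a + b)) := hstep.trans (le_of_eq hmerge)
        rw [hHdef]; dsimp only; rw [hg3x]
        linarith [hfinal, hnn1, hnn2]
  -- integrability of the majorant pieces
  have hInt1 : Integrable g1 := by
    rw [hg1def]
    exact ((cont_jb a).integrableOn_Icc).integrable_indicator measurableSet_Icc
  have hInt2' : Integrable g2 := by
    rw [hg2def]
    exact ((cont_jb b).integrableOn_Icc).integrable_indicator measurableSet_Icc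
  have hInt2 : Integrable (fun x => g2 (x - t)) := hInt2'.comp_sub_right t
  have hmeas3 : MeasurableSet {y : ℝ | R < |y|} :=
    (isOpen_lt continuous_const continuous_abs).measurableSet
  have hInt3 : Integrable g3 := by
    rw [hg3def]
    exact ((jb_integrable hab).integrableOn).integrable_indicator hmeas3
  have hIntH : Integrable H := by
    rw [hHdef]
    exact ((hInt1.const_mul _).add (hInt2.const_mul _)).add (hInt3.const_mul _)
  -- compare
  have hmono : ∫ x : ℝ, (1 + |x|) ^ (-a) * (1 + |x - t|) ^ (-b) ≤ ∫ x, H x := by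
    apply integral_mono_of_nonneg
    · exact Filter.Eventually.of_forall (fun x => by positivity)
    · exact hIntH
    · exact Filter.Eventually.of_forall hFH
  -- compute ∫ H
  have hsplitH : ∫ x, H x = 2 ^ b * τ ^ (-b) * (∫ x, g1 x) + 2 ^ a * τ ^ (-a) * (∫ x, g2 x)
      + 3 ^ b * (∫ x, g3 x) := by
    have hi1 : Integrable (fun x => 2 ^ b * τ ^ (-b) * g1 x) volume := hInt1.const_mul _
    have hi2 : Integrable (fun x => 2 ^ a * τ ^ (-a) * g2 (x - t)) volume := hInt2.const_mul _
    have hi3 : Integrable (fun x => 3 ^ b * g3 x) volume := hInt3.const_mul _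
    have hi12 : Integrable (fun x => 2 ^ b * τ ^ (-b) * g1 x
        + 2 ^ a * τ ^ (-a) * g2 (x - t)) volume := hi1.add hi2
    simp only [hHdef]
    rw [integral_add hi12 hi3, integral_add hi1 hi2,
      integral_const_mul, integral_const_mul, integral_const_mul]
    have htrans : ∫ x, g2 (x - t) = ∫ x, g2 x := by
      have := integral_add_right_eq_self (μ := volume) g2 (-t)
      simpa [sub_eq_add_neg] using this
    rw [htrans]
  -- bound the three integrals
  have hI1 : ∫ x, g1 x ≤ 2 / |1 - a| * (1 + R) ^ (max (1 - a) 0) := by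
    rw [hg1def, integral_indicator measurableSet_Icc]
    exact ball_integral a ha ha1 R hR0
  have hI2 : ∫ x, g2 x ≤ 2 / |1 - b| * (1 + R) ^ (max (1 - b) 0) := by
    rw [hg2def, integral_indicator measurableSet_Icc]
    exact ball_integral b hb hb1 R hR0
  have hI3 : ∫ x, g3 x ≤ 2 / (a + b - 1) * (1 + R) ^ (1 - (a + b)) := by
    rw [hg3def, integral_indicator hmeas3]
    exact tail_integral (a + b) hab R hR0
  -- bound each term by const * τ^(-c)
  have hτc : (0:ℝ) ≤ τ ^ (-c) := Real.rpow_nonneg (le_of_lt hτpos) _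
  have hT1 : 2 ^ b * τ ^ (-b) * (2 / |1 - a| * (1 + R) ^ (max (1 - a) 0))
      ≤ 2 * 2 ^ b / |1 - a| * τ ^ (-c) := by
    have habs : (0:ℝ) < |1 - a| := abs_pos.mpr (by intro h; apply ha1; linarith)
    have hm0 : (0:ℝ) ≤ max (1 - a) 0 := le_max_right _ _
    have hup : (1 + R) ^ (max (1 - a) 0) ≤ τ ^ (max (1 - a) 0) :=
      Real.rpow_le_rpow (le_of_lt h1R0) h1Rτ hm0
    have hexp : -b + max (1 - a) 0 ≤ -c := by
      rcases lt_or_gt_of_ne ha1 with h | h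
      · rw [max_eq_left (by linarith)]; linarith
      · rw [max_eq_right (by linarith)]; linarith
    have hmerge : τ ^ (-b) * τ ^ (max (1 - a) 0) = τ ^ (-b + max (1 - a) 0) :=
      (Real.rpow_add hτpos _ _).symm
    have hfin : τ ^ (-b + max (1 - a) 0) ≤ τ ^ (-c) :=
      Real.rpow_le_rpow_of_exponent_le hτ1 hexp
    calc 2 ^ b * τ ^ (-b) * (2 / |1 - a| * (1 + R) ^ (max (1 - a) 0))
        ≤ 2 ^ b * τ ^ (-b) * (2 / |1 - a| * τ ^ (max (1 - a) 0)) := by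
          apply mul_le_mul_of_nonneg_left _ (mul_nonneg h2b hτb)
          apply mul_le_mul_of_nonneg_left hup (by positivity)
      _ = 2 * 2 ^ b / |1 - a| * (τ ^ (-b) * τ ^ (max (1 - a) 0)) := by ring
      _ = 2 * 2 ^ b / |1 - a| * τ ^ (-b + max (1 - a) 0) := by rw [hmerge]
      _ ≤ 2 * 2 ^ b / |1 - a| * τ ^ (-c) := by
          apply mul_le_mul_of_nonneg_left hfin (by positivity)
  have hT2 : 2 ^ a * τ ^ (-a) * (2 / |1 - b| * (1 + R) ^ (max (1 - b) 0))
      ≤ 2 * 2 ^ a / |1 - b| * τ ^ (-c) := by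
    have habs : (0:ℝ) < |1 - b| := abs_pos.mpr (by intro h; apply hb1; linarith)
    have hm0 : (0:ℝ) ≤ max (1 - b) 0 := le_max_right _ _
    have hup : (1 + R) ^ (max (1 - b) 0) ≤ τ ^ (max (1 - b) 0) :=
      Real.rpow_le_rpow (le_of_lt h1R0) h1Rτ hm0
    have hexp : -a + max (1 - b) 0 ≤ -c := by
      rcases lt_or_gt_of_ne hb1 with h | h
      · rw [max_eq_left (by linarith)]; linarith
      · rw [max_eq_right (by linarith)]; linarith
    have hmerge : τ ^ (-a) * τ ^ (max (1 - b) 0) = τ ^ (-a + max (1 - b) 0) :=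
      (Real.rpow_add hτpos _ _).symm
    have hfin : τ ^ (-a + max (1 - b) 0) ≤ τ ^ (-c) :=
      Real.rpow_le_rpow_of_exponent_le hτ1 hexp
    calc 2 ^ a * τ ^ (-a) * (2 / |1 - b| * (1 + R) ^ (max (1 - b) 0))
        ≤ 2 ^ a * τ ^ (-a) * (2 / |1 - b| * τ ^ (max (1 - b) 0)) := by
          apply mul_le_mul_of_nonneg_left _ (mul_nonneg h2a hτa)
          apply mul_le_mul_of_nonneg_left hup (by positivity)
      _ = 2 * 2 ^ a / |1 - b| * (τ ^ (-a) * τ ^ (max (1 - b) 0)) := by ring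
      _ = 2 * 2 ^ a / |1 - b| * τ ^ (-a + max (1 - b) 0) := by rw [hmerge]
      _ ≤ 2 * 2 ^ a / |1 - b| * τ ^ (-c) := by
          apply mul_le_mul_of_nonneg_left hfin (by positivity)
  have hT3 : 3 ^ b * (2 / (a + b - 1) * (1 + R) ^ (1 - (a + b)))
      ≤ 3 ^ b * (2 / (a + b - 1)) * 2 ^ (a + b - 1) * τ ^ (-c) := by
    have hq1 : (0:ℝ) < a + b - 1 := by linarith
    have hup : (1 + R) ^ (1 - (a + b)) ≤ (τ / 2) ^ (1 - (a + b)) :=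
      Real.rpow_le_rpow_of_nonpos (by positivity) hτ2R (by linarith)
    have hid : (τ / 2) ^ (1 - (a + b)) = 2 ^ (a + b - 1) * τ ^ (1 - (a + b)) := by
      rw [Real.div_rpow (le_of_lt hτpos) (by norm_num),
        show (1 - (a + b) : ℝ) = -(a + b - 1) by ring,
        Real.rpow_neg (by norm_num : (0:ℝ) ≤ 2), div_eq_mul_inv, inv_inv, mul_comm]
    have hfin : τ ^ (1 - (a + b)) ≤ τ ^ (-c) :=
      Real.rpow_le_rpow_of_exponent_le hτ1 (by rw [show (1 - (a+b) : ℝ) = -(a+b-1) by ring]; linarith)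
    calc 3 ^ b * (2 / (a + b - 1) * (1 + R) ^ (1 - (a + b)))
        ≤ 3 ^ b * (2 / (a + b - 1) * (2 ^ (a + b - 1) * τ ^ (1 - (a + b)))) := by
          apply mul_le_mul_of_nonneg_left _ h3b
          apply mul_le_mul_of_nonneg_left (hid ▸ hup) (by positivity)
      _ = 3 ^ b * (2 / (a + b - 1)) * 2 ^ (a + b - 1) * τ ^ (1 - (a + b)) := by ring
      _ ≤ 3 ^ b * (2 / (a + b - 1)) * 2 ^ (a + b - 1) * τ ^ (-c) := by
          apply mul_le_mul_of_nonneg_left hfin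
          positivity
  -- assemble
  have hg1i : 0 ≤ ∫ x, g1 x := integral_nonneg hg1nn
  have hg2i : 0 ≤ ∫ x, g2 x := integral_nonneg hg2nn
  have hg3i : 0 ≤ ∫ x, g3 x := integral_nonneg hg3nn
  calc ∫ x : ℝ, (1 + |x|) ^ (-a) * (1 + |x - t|) ^ (-b) ≤ ∫ x, H x := hmono
    _ = 2 ^ b * τ ^ (-b) * (∫ x, g1 x) + 2 ^ a * τ ^ (-a) * (∫ x, g2 x)
        + 3 ^ b * (∫ x, g3 x) := hsplitH
    _ ≤ 2 ^ b * τ ^ (-b) * (2 / |1 - a| * (1 + R) ^ (max (1 - a) 0))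
        + 2 ^ a * τ ^ (-a) * (2 / |1 - b| * (1 + R) ^ (max (1 - b) 0))
        + 3 ^ b * (2 / (a + b - 1) * (1 + R) ^ (1 - (a + b))) := by
        gcongr
    _ ≤ 2 * 2 ^ b / |1 - a| * τ ^ (-c) + 2 * 2 ^ a / |1 - b| * τ ^ (-c)
        + 3 ^ b * (2 / (a + b - 1)) * 2 ^ (a + b - 1) * τ ^ (-c) := by
        exact add_le_add (add_le_add hT1 hT2) hT3
    _ = (2 * 2 ^ b / |1 - a| + 2 * 2 ^ a / |1 - b|
        + 3 ^ b * (2 / (a + b - 1)) * 2 ^ (a + b - 1)) * τ ^ (-c) := by ring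


theorem stmt_0 (a b : ℝ) (ha : 0 < a) (hb : 0 < b) (hab : 1 < a + b)
    (ha1 : a ≠ 1) (hb1 : b ≠ 1) :
    ∃ C : ℝ, 0 < C ∧ ∀ α β : ℝ,
      (∫ x : ℝ, 1 / ((1 + |x - α|) ^ a * (1 + |x - β|) ^ b))
        ≤ C * (1 + |α - β|) ^ (-(min (min a b) (a + b - 1))) := by
  have habs_a : (0:ℝ) < |1 - a| := abs_pos.mpr (by intro h; apply ha1; linarith)
  have habs_b : (0:ℝ) < |1 - b| := abs_pos.mpr (by intro h; apply hb1; linarith)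
  have hq1 : (0:ℝ) < a + b - 1 := by linarith
  refine ⟨2 * 2 ^ b / |1 - a| + 2 * 2 ^ a / |1 - b|
      + 3 ^ b * (2 / (a + b - 1)) * 2 ^ (a + b - 1), ?_, ?_⟩
  · have p1 : (0:ℝ) < 2 * 2 ^ b / |1 - a| :=
      div_pos (by positivity) habs_a
    have p2 : (0:ℝ) < 2 * 2 ^ a / |1 - b| :=
      div_pos (by positivity) habs_b
    have p3 : (0:ℝ) < 3 ^ b * (2 / (a + b - 1)) * 2 ^ (a + b - 1) := by
      have := Real.rpow_pos_of_pos (show (0:ℝ) < 3 by norm_num) b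
      have := Real.rpow_pos_of_pos (show (0:ℝ) < 2 by norm_num) (a + b - 1)
      have := div_pos (show (0:ℝ) < 2 by norm_num) hq1
      positivity
    linarith
  · intro α β
    have hrw : (∫ x : ℝ, 1 / ((1 + |x - α|) ^ a * (1 + |x - β|) ^ b))
        = ∫ x : ℝ, (1 + |x - α|) ^ (-a) * (1 + |x - β|) ^ (-b) := by
      congr 1
      funext x
      have h1 : (0:ℝ) ≤ 1 + |x - α| := by positivity
      have h2 : (0:ℝ) ≤ 1 + |x - β| := by positivity
      rw [Real.rpow_neg h1, Real.rpow_neg h2, one_div, mul_inv]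
    have htrans : (∫ x : ℝ, (1 + |x - α|) ^ (-a) * (1 + |x - β|) ^ (-b))
        = ∫ y : ℝ, (1 + |y|) ^ (-a) * (1 + |y - (β - α)|) ^ (-b) := by
      have hcongr : (∫ x : ℝ, (1 + |x - α|) ^ (-a) * (1 + |x - β|) ^ (-b))
          = ∫ x : ℝ, (fun y : ℝ => (1 + |y|) ^ (-a) * (1 + |y - (β - α)|) ^ (-b)) (x + -α) := by
        congr 1
        funext x
        simp only []
        rw [show x + -α - (β - α) = x - β by ring, show x + -α = x - α by ring]
      rw [hcongr, integral_add_right_eq_self (μ := volume)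
        (fun y : ℝ => (1 + |y|) ^ (-a) * (1 + |y - (β - α)|) ^ (-b)) (-α)]
    rw [hrw, htrans, show |α - β| = |β - α| from abs_sub_comm α β]
    exact key_lemma a b ha hb hab ha1 hb1 (β - α)
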